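/- Let G be a graph whose binomial edge ideal is unmixed (i.e., c_G(S) = |S| + 1 for all cut sets S), and let S, T be cut sets with |T| ≥ |S| and |T \ S| > 1. Then the minimal primes P_S and P_T do not form an edge of the dual graph, i.e., ht(P_S + P_T) ≥ ht(P_S) + 2. -/

import Mathlib

open SimpleGraph Finset

/-- Number of connected components of the subgraph of `G` induced on the complement of `S`. -/
noncomputable def numComp {V : Type*} [Fintype V] (G : SimpleGraph V) (S : Finset V) : ℕ :=
  Nat.card (G.induce ((↑S : Set V)ᶜ)).ConnectedComponent

/-- `S` is a cut set of `G`. -/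
def IsCutSet {V : Type*} [Fintype V] [DecidableEq V] (G : SimpleGraph V) (S : Finset V) : Prop :=
  S = ∅ ∨ (S ≠ ∅ ∧ ∀ i ∈ S, numComp G (S.erase i) < numComp G S)

/-- The combinatorial condition equivalent to unmixedness of the binomial edge ideal. -/
def Unmixed {V : Type*} [Fintype V] [DecidableEq V] (G : SimpleGraph V) : Prop :=
  ∀ S : Finset V, IsCutSet G S → numComp G S = S.card + 1

open MvPolynomial in
/-- The prime ideal `P_S(G)` in `R = K[x_1, ..., x_n, y_1, ..., y_n]`: it is generated by the
variables `x_i, y_i` for `i ∈ S` together with the `2`-minors `x_i y_j - x_j y_i` for all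
pairs `i, j` lying in a common connected component of `G` restricted to the complement of `S`
(these generate the binomial edge ideals of the complete graphs on the components). -/
noncomputable def PSIdeal {n : ℕ} (K : Type*) [Field K] (G : SimpleGraph (Fin n))
    (S : Finset (Fin n)) : Ideal (MvPolynomial (Fin n ⊕ Fin n) K) :=
  Ideal.span
    ((fun i => (X (Sum.inl i) : MvPolynomial (Fin n ⊕ Fin n) K)) '' (↑S : Set (Fin n)) ∪
     (fun i => (X (Sum.inr i) : MvPolynomial (Fin n ⊕ Fin n) K)) '' (↑S : Set (Fin n)) ∪
     {p | ∃ i j : Fin n,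
        (∃ (hi : i ∈ ((↑S : Set (Fin n))ᶜ)) (hj : j ∈ ((↑S : Set (Fin n))ᶜ)),
          (G.induce ((↑S : Set (Fin n))ᶜ)).Reachable ⟨i, hi⟩ ⟨j, hj⟩) ∧
        p = X (Sum.inl i) * X (Sum.inr j) - X (Sum.inl j) * X (Sum.inr i)})

/-- The height of an ideal: the infimum of the heights (in the prime spectrum) of the
prime ideals containing it. -/
noncomputable def heightIdeal {R : Type*} [CommRing R] (I : Ideal R) : ℕ∞ :=
  ⨅ (p : PrimeSpectrum R) (_ : I ≤ p.asIdeal), Order.height p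

namespace BEIAux
open MvPolynomial

variable {n : ℕ} (K : Type*) [Field K] {C : Type*}

/-- generic "variables plus minors within color classes" ideal -/
noncomputable def QIdeal (A : Finset (Fin n)) (c : Fin n → C) :
    Ideal (MvPolynomial (Fin n ⊕ Fin n) K) :=
  Ideal.span
    ((fun i => (X (Sum.inl i) : MvPolynomial (Fin n ⊕ Fin n) K)) '' (↑A : Set (Fin n)) ∪
     (fun i => (X (Sum.inr i) : MvPolynomial (Fin n ⊕ Fin n) K)) '' (↑A : Set (Fin n)) ∪
     {p | ∃ i j : Fin n, (i ∉ A ∧ j ∉ A ∧ c i = c j) ∧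
        p = X (Sum.inl i) * X (Sum.inr j) - X (Sum.inl j) * X (Sum.inr i)})

variable {K}

lemma mem_QIdeal_var_inl {A : Finset (Fin n)} {c : Fin n → C} {a : Fin n} (ha : a ∈ A) :
    (X (Sum.inl a) : MvPolynomial (Fin n ⊕ Fin n) K) ∈ QIdeal K A c :=
  Ideal.subset_span (Or.inl (Or.inl ⟨a, by simpa using ha, rfl⟩))

lemma mem_QIdeal_var_inr {A : Finset (Fin n)} {c : Fin n → C} {a : Fin n} (ha : a ∈ A) :
    (X (Sum.inr a) : MvPolynomial (Fin n ⊕ Fin n) K) ∈ QIdeal K A c :=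
  Ideal.subset_span (Or.inl (Or.inr ⟨a, by simpa using ha, rfl⟩))

lemma mem_QIdeal_minor {A : Finset (Fin n)} {c : Fin n → C} {a b : Fin n}
    (ha : a ∉ A) (hb : b ∉ A) (hc : c a = c b) :
    (X (Sum.inl a) * X (Sum.inr b) - X (Sum.inl b) * X (Sum.inr a) :
      MvPolynomial (Fin n ⊕ Fin n) K) ∈ QIdeal K A c :=
  Ideal.subset_span (Or.inr ⟨a, b, ⟨ha, hb, hc⟩, rfl⟩)

/-- no variable `X (inl k)`, `k ∉ A`, belongs to `QIdeal A c`. -/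
lemma X_inl_not_mem_QIdeal {A : Finset (Fin n)} {c : Fin n → C} {k : Fin n} (hk : k ∉ A) :
    (X (Sum.inl k) : MvPolynomial (Fin n ⊕ Fin n) K) ∉ QIdeal K A c := by
  classical
  intro hmem
  set ev : Fin n ⊕ Fin n → K := fun v =>
    match v with
    | Sum.inl a => if a = k then 1 else 0
    | Sum.inr _ => 0 with hev
  have hker : QIdeal K A c ≤ RingHom.ker (aeval (R := K) ev).toRingHom := by
    rw [QIdeal, Ideal.span_le]
    rintro p ((⟨a, ha, rfl⟩ | ⟨a, ha, rfl⟩) | ⟨a, b, ⟨haA, hbA, hcab⟩, rfl⟩)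
    · have : a ≠ k := by rintro rfl; exact hk (by simpa using ha)
      simp [RingHom.mem_ker, hev, this]
    · simp [RingHom.mem_ker, hev]
    · simp [RingHom.mem_ker, hev]
  have h1 : (aeval (R := K) ev) (X (Sum.inl k)) = 0 := hker hmem
  rw [aeval_X] at h1
  simp [hev] at h1


section Hom
variable (K) (A : Finset (Fin n)) (c : Fin n → C)

/-- the target variables of the classifying homomorphism -/
noncomputable def qAux : Fin n ⊕ Fin n → MvPolynomial ((C ⊕ C) ⊕ Fin n) K := fun v =>
  match v with
  | Sum.inl a => if a ∈ A then 0 else X (Sum.inl (Sum.inl (c a))) * X (Sum.inr a)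
  | Sum.inr a => if a ∈ A then 0 else X (Sum.inl (Sum.inr (c a))) * X (Sum.inr a)

/-- the classifying homomorphism whose kernel is `QIdeal A c` -/
noncomputable def qHom : MvPolynomial (Fin n ⊕ Fin n) K →ₐ[K]
    MvPolynomial ((C ⊕ C) ⊕ Fin n) K :=
  aeval (qAux K A c)

lemma QIdeal_le_ker : QIdeal K A c ≤ RingHom.ker (qHom K A c).toRingHom := by
  classical
  rw [QIdeal, Ideal.span_le]
  rintro p ((⟨a, ha, rfl⟩ | ⟨a, ha, rfl⟩) | ⟨a, b, ⟨haA, hbA, hcab⟩, rfl⟩)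
  · have ha' : a ∈ A := by simpa using ha
    simp [RingHom.mem_ker, qHom, qAux, ha']
  · have ha' : a ∈ A := by simpa using ha
    simp [RingHom.mem_ker, qHom, qAux, ha']
  · simp only [SetLike.mem_coe, RingHom.mem_ker, AlgHom.toRingHom_eq_coe, RingHom.coe_coe,
      map_sub, map_mul, qHom, aeval_X, qAux, if_neg haA, if_neg hbA, hcab]
    ring

end Hom


section Reduce
variable {A : Finset (Fin n)} {c : Fin n → C}

/-- standard monomials -/
def StdMon (A : Finset (Fin n)) (c : Fin n → C) (d : (Fin n ⊕ Fin n) →₀ ℕ) : Prop :=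
  (∀ a ∈ A, d (Sum.inl a) = 0 ∧ d (Sum.inr a) = 0) ∧
  ∀ a b : Fin n, c a = c b → a < b → d (Sum.inl b) = 0 ∨ d (Sum.inr a) = 0

/-- weight used for termination of straightening -/
def wt (d : (Fin n ⊕ Fin n) →₀ ℕ) : ℕ := ∑ x : Fin n, d (Sum.inl x) * (x : ℕ)

lemma wt_add (p q : (Fin n ⊕ Fin n) →₀ ℕ) : wt (p + q) = wt p + wt q := by
  simp [wt, Finsupp.add_apply, add_mul, Finset.sum_add_distrib]

lemma wt_single_inl (x : Fin n) : wt (Finsupp.single (Sum.inl x : Fin n ⊕ Fin n) 1) = (x : ℕ) := by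
  simp [wt, Finsupp.single_apply]

lemma wt_single_inr (x : Fin n) : wt (Finsupp.single (Sum.inr x : Fin n ⊕ Fin n) 1) = 0 := by
  simp [wt, Finsupp.single_apply]

lemma X_mul_X_eq {σ : Type*} (u v : σ) :
    (X u * X v : MvPolynomial σ K) =
      monomial (Finsupp.single u 1 + Finsupp.single v 1) 1 := by
  rw [X, X, monomial_mul, one_mul]

lemma mem_of_coord {d : (Fin n ⊕ Fin n) →₀ ℕ} {v : Fin n ⊕ Fin n} (hv : d v ≠ 0)
    (hXv : (X v : MvPolynomial (Fin n ⊕ Fin n) K) ∈ QIdeal K A c) :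
    (monomial d (1:K)) ∈ QIdeal K A c := by
  have hle : Finsupp.single v 1 ≤ d := by
    rw [Finsupp.single_le_iff]
    omega
  have hsum : Finsupp.single v 1 + (d - Finsupp.single v 1) = d :=
    add_tsub_cancel_of_le hle
  have : (monomial d (1:K)) = X v * monomial (d - Finsupp.single v 1) 1 := by
    rw [X, monomial_mul, one_mul, hsum]
  rw [this]
  exact Ideal.mul_mem_right _ _ hXv

lemma reduce_aux (N : ℕ) : ∀ d : (Fin n ⊕ Fin n) →₀ ℕ, wt d = N →
    (monomial d (1:K)) ∈ QIdeal K A c ∨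
      ∃ d', StdMon A c d' ∧ (monomial d (1:K)) - monomial d' 1 ∈ QIdeal K A c := by
  classical
  induction N using Nat.strong_induction_on with
  | _ N IH =>
  intro d hN
  by_cases hA : ∀ a ∈ A, d (Sum.inl a) = 0 ∧ d (Sum.inr a) = 0
  · by_cases hstd : ∀ a b : Fin n, c a = c b → a < b → d (Sum.inl b) = 0 ∨ d (Sum.inr a) = 0
    · exact Or.inr ⟨d, ⟨hA, hstd⟩, by simp⟩
    · push_neg at hstd
      obtain ⟨a, b, hcab, hab, hb1, ha1⟩ := hstd
      have haA : a ∉ A := fun h => ha1 (hA a h).2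
      have hbA : b ∉ A := fun h => hb1 (hA b h).1
      set e : (Fin n ⊕ Fin n) →₀ ℕ :=
        Finsupp.single (Sum.inl b) 1 + Finsupp.single (Sum.inr a) 1 with he
      have hle : e ≤ d := by
        rw [Finsupp.le_def]
        intro v
        rcases v with x | x
        · simp only [he, Finsupp.add_apply, Finsupp.single_apply]
          by_cases hx : (Sum.inl b : Fin n ⊕ Fin n) = Sum.inl x
          · obtain rfl := Sum.inl.inj hx
            have hne2 : (Sum.inr a : Fin n ⊕ Fin n) ≠ Sum.inl b := by simp
            rw [if_pos rfl, if_neg hne2]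
            omega
          · rw [if_neg hx]
            have : (Sum.inr a : Fin n ⊕ Fin n) ≠ Sum.inl x := by simp
            rw [if_neg this]
            omega
        · simp only [he, Finsupp.add_apply, Finsupp.single_apply]
          have h1 : (Sum.inl b : Fin n ⊕ Fin n) ≠ Sum.inr x := by simp
          rw [if_neg h1]
          by_cases hx : (Sum.inr a : Fin n ⊕ Fin n) = Sum.inr x
          · obtain rfl := Sum.inr.inj hx
            rw [if_pos rfl]
            omega
          · rw [if_neg hx]
            omega
      set d'' : (Fin n ⊕ Fin n) →₀ ℕ := d - e with hd''
      have key1 : e + d'' = d := by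
        rw [add_comm]
        exact tsub_add_cancel_of_le hle
      set d2 : (Fin n ⊕ Fin n) →₀ ℕ :=
        (Finsupp.single (Sum.inl a) 1 + Finsupp.single (Sum.inr b) 1) + d'' with hd2
      have hid : (monomial d (1:K)) - monomial d2 1 =
          (X (Sum.inl b) * X (Sum.inr a) - X (Sum.inl a) * X (Sum.inr b)) * monomial d'' 1 := by
        rw [sub_mul, X_mul_X_eq, X_mul_X_eq, monomial_mul, monomial_mul, one_mul, ← he, key1, hd2]
      have hgen : (X (Sum.inl b) * X (Sum.inr a) - X (Sum.inl a) * X (Sum.inr b) :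
          MvPolynomial (Fin n ⊕ Fin n) K) ∈ QIdeal K A c :=
        mem_QIdeal_minor hbA haA hcab.symm
      have hQd : (monomial d (1:K)) - monomial d2 1 ∈ QIdeal K A c := by
        rw [hid]; exact Ideal.mul_mem_right _ _ hgen
      have hwt : wt d2 < N := by
        have h1 : wt d = wt d'' + ((b : ℕ) + 0) := by
          rw [← key1, wt_add, he, wt_add, wt_single_inl, wt_single_inr, add_comm]
        have h2 : wt d2 = wt d'' + ((a : ℕ) + 0) := by
          rw [hd2, wt_add, wt_add, wt_single_inl, wt_single_inr, add_comm]
        have hab' : (a : ℕ) < (b : ℕ) := hab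
        omega
      rcases IH (wt d2) (by omega) d2 rfl with h2 | ⟨d', hstd', h2⟩
      · left
        have := Ideal.add_mem _ hQd h2
        rwa [sub_add_cancel] at this
      · right
        refine ⟨d', hstd', ?_⟩
        have := Ideal.add_mem _ hQd h2
        rwa [sub_add_sub_cancel] at this
  · push_neg at hA
    obtain ⟨a, haA, hne⟩ := hA
    left
    by_cases h1 : d (Sum.inl a) = 0
    · have h2 : d (Sum.inr a) ≠ 0 := hne h1
      exact mem_of_coord h2 (mem_QIdeal_var_inr haA)
    · exact mem_of_coord h1 (mem_QIdeal_var_inl haA)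

lemma reduce (d : (Fin n ⊕ Fin n) →₀ ℕ) :
    (monomial d (1:K)) ∈ QIdeal K A c ∨
      ∃ d', StdMon A c d' ∧ (monomial d (1:K)) - monomial d' 1 ∈ QIdeal K A c :=
  reduce_aux (wt d) d rfl

end Reduce


section Inj
variable {A : Finset (Fin n)} {c : Fin n → C}

/-- exponent vectors of images of the variables -/
noncomputable def wVec (c : Fin n → C) : (Fin n ⊕ Fin n) → (((C ⊕ C) ⊕ Fin n) →₀ ℕ) := fun v =>
  match v with
  | Sum.inl a => Finsupp.single (Sum.inl (Sum.inl (c a))) 1 + Finsupp.single (Sum.inr a) 1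
  | Sum.inr a => Finsupp.single (Sum.inl (Sum.inr (c a))) 1 + Finsupp.single (Sum.inr a) 1

/-- exponent vector of the image of a monomial -/
noncomputable def phiExp (c : Fin n → C) (d : (Fin n ⊕ Fin n) →₀ ℕ) : ((C ⊕ C) ⊕ Fin n) →₀ ℕ :=
  d.sum fun v k => k • wVec c v

lemma prod_monomial {ι σ' : Type*} (s : Finset ι) (f : ι → (σ' →₀ ℕ)) :
    (∏ i ∈ s, (monomial (f i) (1:K))) = monomial (∑ i ∈ s, f i) 1 := by
  classical
  induction s using Finset.cons_induction with
  | empty => simp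
  | cons a s ha ih => rw [Finset.prod_cons, Finset.sum_cons, ih, monomial_mul, one_mul]

lemma qHom_monomial (d : (Fin n ⊕ Fin n) →₀ ℕ)
    (hA : ∀ a ∈ A, d (Sum.inl a) = 0 ∧ d (Sum.inr a) = 0) :
    qHom K A c (monomial d (1:K)) = monomial (phiExp c d) 1 := by
  classical
  rw [qHom, aeval_monomial, map_one, one_mul]
  have hcongr : ∀ v ∈ d.support, qAux K A c v ^ (d v) = monomial ((d v) • wVec c v) 1 := by
    intro v hv
    have hdv : d v ≠ 0 := Finsupp.mem_support_iff.mp hv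
    rcases v with x | x
    · have hx : x ∉ A := fun h => hdv (hA x h).1
      show (if x ∈ A then 0 else X (Sum.inl (Sum.inl (c x))) * X (Sum.inr x)) ^ _ = _
      rw [if_neg hx, X_mul_X_eq, monomial_pow, one_pow]
      rfl
    · have hx : x ∉ A := fun h => hdv (hA x h).2
      show (if x ∈ A then 0 else X (Sum.inl (Sum.inr (c x))) * X (Sum.inr x)) ^ _ = _
      rw [if_neg hx, X_mul_X_eq, monomial_pow, one_pow]
      rfl
  rw [Finsupp.prod, Finset.prod_congr rfl hcongr, prod_monomial]
  rfl

lemma phiExp_inr (d : (Fin n ⊕ Fin n) →₀ ℕ) (x : Fin n) :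
    phiExp c d (Sum.inr x) = d (Sum.inl x) + d (Sum.inr x) := by
  classical
  rw [phiExp, Finsupp.sum_apply, Finsupp.sum_fintype]
  · rw [Fintype.sum_sum_type]
    have e1 : ∀ y : Fin n, (d (Sum.inl y) • wVec c (Sum.inl y)) (Sum.inr x)
        = if y = x then d (Sum.inl y) else 0 := by
      intro y
      simp only [wVec, Finsupp.smul_apply, Finsupp.add_apply, Finsupp.single_apply, smul_eq_mul]
      by_cases hy : y = x
      · subst hy; simp
      · simp [hy]
    have e2 : ∀ y : Fin n, (d (Sum.inr y) • wVec c (Sum.inr y)) (Sum.inr x)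
        = if y = x then d (Sum.inr y) else 0 := by
      intro y
      simp only [wVec, Finsupp.smul_apply, Finsupp.add_apply, Finsupp.single_apply, smul_eq_mul]
      by_cases hy : y = x
      · subst hy; simp
      · simp [hy]
    rw [Finset.sum_congr rfl fun y _ => e1 y, Finset.sum_congr rfl fun y _ => e2 y,
      Finset.sum_ite_eq' Finset.univ x, Finset.sum_ite_eq' Finset.univ x]
    simp
  · intro v; simp

lemma phiExp_inl_inl [DecidableEq C] (d : (Fin n ⊕ Fin n) →₀ ℕ) (u : C) :
    phiExp c d (Sum.inl (Sum.inl u)) = ∑ x : Fin n, if c x = u then d (Sum.inl x) else 0 := by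
  classical
  rw [phiExp, Finsupp.sum_apply, Finsupp.sum_fintype]
  · rw [Fintype.sum_sum_type]
    have e1 : ∀ x : Fin n, (d (Sum.inl x) • wVec c (Sum.inl x)) (Sum.inl (Sum.inl u))
        = if c x = u then d (Sum.inl x) else 0 := by
      intro x
      simp only [wVec, Finsupp.smul_apply, Finsupp.add_apply, Finsupp.single_apply, smul_eq_mul]
      by_cases hc : c x = u
      · simp [hc]
      · simp [hc]
    have e2 : ∀ x : Fin n, (d (Sum.inr x) • wVec c (Sum.inr x)) (Sum.inl (Sum.inl u))
        = 0 := by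
      intro x
      simp [wVec, Finsupp.single_apply]
    rw [Finset.sum_congr rfl fun y _ => e1 y, Finset.sum_congr rfl fun y _ => e2 y,
      Finset.sum_const_zero, add_zero]
  · intro v; simp

end Inj


section Std
variable {A : Finset (Fin n)} {c : Fin n → C}

lemma std_formula [DecidableEq C] {d : (Fin n ⊕ Fin n) →₀ ℕ} (hstd : StdMon A c d) (a : Fin n) :
    d (Sum.inl a) = min (d (Sum.inl a) + d (Sum.inr a))
      ((∑ x : Fin n, if c x = c a then d (Sum.inl x) else 0)
        - ∑ x ∈ (Finset.univ.filter (fun x => c x = c a)).filter (fun x => x < a),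
            (d (Sum.inl x) + d (Sum.inr x))) := by
  classical
  set s : Finset (Fin n) := Finset.univ.filter (fun x => c x = c a) with hs
  have hmem : ∀ x, x ∈ s ↔ c x = c a := by intro x; simp [hs]
  have hT : (∑ x : Fin n, if c x = c a then d (Sum.inl x) else 0) = ∑ x ∈ s, d (Sum.inl x) :=
    (Finset.sum_filter _ _).symm
  rw [hT]
  set T := ∑ x ∈ s, d (Sum.inl x) with hTdef
  set Ssum := ∑ x ∈ s.filter (fun x => x < a), (d (Sum.inl x) + d (Sum.inr x)) with hSdef
  have hanotin : a ∉ s.filter (fun x => x < a) := by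
    intro h
    exact absurd (Finset.mem_filter.mp h).2 (lt_irrefl a)
  have has : a ∈ s := (hmem a).mpr rfl
  have hTeqgen : d (Sum.inr a) ≠ 0 →
      T = ∑ x ∈ s.filter (fun x => x < a), d (Sum.inl x) + d (Sum.inl a) := by
    intro hra
    have hb0 : ∀ x, a < x → c x = c a → d (Sum.inl x) = 0 := by
      intro x hx hcx
      rcases hstd.2 a x hcx.symm hx with h | h
      · exact h
      · exact absurd h hra
    rw [hTdef, ← Finset.sum_filter_add_sum_filter_not s (fun x => x < a)]
    congr 1
    apply Finset.sum_eq_single_of_mem a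
    · exact Finset.mem_filter.mpr ⟨has, lt_irrefl a⟩
    · intro x hx hne
      rcases Finset.mem_filter.mp hx with ⟨hxs, hxa⟩
      exact hb0 x (lt_of_le_of_ne (not_lt.mp hxa) (Ne.symm hne)) ((hmem x).mp hxs)
  by_cases hla : d (Sum.inl a) = 0
  · by_cases hra : d (Sum.inr a) = 0
    · rw [hla, hra]; simp
    · have hTeq := hTeqgen hra
      have hle : T ≤ Ssum := by
        rw [hTeq, hla, add_zero, hSdef]
        exact Finset.sum_le_sum fun x _ => Nat.le_add_right _ _
      rw [hla, Nat.sub_eq_zero_of_le hle]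
      simp
  · have hb0' : ∀ x, x < a → c x = c a → d (Sum.inr x) = 0 := by
      intro x hx hcx
      rcases hstd.2 x a hcx hx with h | h
      · exact absurd h hla
      · exact h
    have hSeq : Ssum = ∑ x ∈ s.filter (fun x => x < a), d (Sum.inl x) := by
      rw [hSdef]
      refine Finset.sum_congr rfl fun x hx => ?_
      rcases Finset.mem_filter.mp hx with ⟨hxs, hxa⟩
      rw [hb0' x hxa ((hmem x).mp hxs), add_zero]
    by_cases hra : d (Sum.inr a) = 0
    · have hsubset : insert a (s.filter (fun x => x < a)) ⊆ s := by
        intro x hx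
        rcases Finset.mem_insert.mp hx with rfl | hx
        · exact has
        · exact Finset.filter_subset _ _ hx
      have hge : Ssum + d (Sum.inl a) ≤ T := by
        rw [hSeq]
        have h1 : ∑ x ∈ insert a (s.filter (fun x => x < a)), d (Sum.inl x)
            = d (Sum.inl a) + ∑ x ∈ s.filter (fun x => x < a), d (Sum.inl x) :=
          Finset.sum_insert hanotin
        have h2 : ∑ x ∈ insert a (s.filter (fun x => x < a)), d (Sum.inl x)
            ≤ ∑ x ∈ s, d (Sum.inl x) := Finset.sum_le_sum_of_subset hsubset
        omega
      rw [hra, add_zero, min_eq_left (by omega)]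
    · have hTeq := hTeqgen hra
      have hkey : T - Ssum = d (Sum.inl a) := by
        rw [hSeq] at *
        omega
      rw [hkey, min_eq_right (Nat.le_add_right _ _)]

lemma std_inj [DecidableEq C] {d d' : (Fin n ⊕ Fin n) →₀ ℕ}
    (hd : StdMon A c d) (hd' : StdMon A c d') (h : phiExp c d = phiExp c d') : d = d' := by
  have hco : ∀ x, phiExp c d x = phiExp c d' x := fun x => by rw [h]
  have hinr : ∀ a : Fin n, d (Sum.inl a) + d (Sum.inr a) = d' (Sum.inl a) + d' (Sum.inr a) := by
    intro a
    rw [← phiExp_inr (c := c), ← phiExp_inr (c := c), hco]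
  have hinl : ∀ a : Fin n, d (Sum.inl a) = d' (Sum.inl a) := by
    intro a
    rw [std_formula hd a, std_formula hd' a]
    congr 1
    · exact hinr a
    congr 1
    · rw [← phiExp_inl_inl (c := c), ← phiExp_inl_inl (c := c), hco]
    · exact Finset.sum_congr rfl fun x _ => hinr x
  ext v
  rcases v with x | x
  · exact hinl x
  · have h1 := hinr x
    have h2 := hinl x
    omega

end Std


section PrimePart
variable (K) (A : Finset (Fin n)) (c : Fin n → C)

lemma exists_reduction (f : MvPolynomial (Fin n ⊕ Fin n) K) :
    ∃ g, f - g ∈ QIdeal K A c ∧ ∀ e ∈ g.support, StdMon A c e := by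
  classical
  have hmono : ∀ d : (Fin n ⊕ Fin n) →₀ ℕ, ∃ g : MvPolynomial (Fin n ⊕ Fin n) K,
      (monomial d (1:K)) - g ∈ QIdeal K A c ∧ ∀ e ∈ g.support, StdMon A c e := by
    intro d
    rcases reduce (K := K) (A := A) (c := c) d with h | ⟨d', hstd, h⟩
    · exact ⟨0, by simpa using h, by simp⟩
    · refine ⟨monomial d' 1, h, fun e he => ?_⟩
      have hsupp := MvPolynomial.support_monomial (s := d') (a := (1:K))
      rw [if_neg one_ne_zero] at hsupp
      rw [hsupp, Finset.mem_singleton] at he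
      rwa [he]
  choose g hg hgs using hmono
  refine ⟨∑ d ∈ f.support, (coeff d f) • g d, ?_, ?_⟩
  · have hrw : ∑ d ∈ f.support, (coeff d f) • ((monomial d 1) - g d)
        = f - ∑ d ∈ f.support, (coeff d f) • g d := by
      have h1 : ∀ d ∈ f.support, (coeff d f) • ((monomial d 1) - g d)
          = monomial d (coeff d f) - (coeff d f) • g d := by
        intro d _
        rw [smul_sub, smul_monomial, smul_eq_mul, mul_one]
      rw [Finset.sum_congr rfl h1, Finset.sum_sub_distrib, support_sum_monomial_coeff f]
    rw [← hrw]
    refine Ideal.sum_mem _ fun d _ => ?_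
    rw [smul_eq_C_mul]
    exact Ideal.mul_mem_left _ _ (hg d)
  · intro e he
    have h1 := MvPolynomial.support_sum he
    rw [Finset.mem_biUnion] at h1
    obtain ⟨d, _, hd⟩ := h1
    exact hgs d e (MvPolynomial.support_smul hd)

lemma std_zero [DecidableEq C] (g : MvPolynomial (Fin n ⊕ Fin n) K)
    (hstd : ∀ e ∈ g.support, StdMon A c e) (h0 : qHom K A c g = 0) : g = 0 := by
  classical
  by_contra hne
  obtain ⟨d0, hd0⟩ := MvPolynomial.support_nonempty.mpr hne
  have hrep : qHom K A c g = ∑ d ∈ g.support, monomial (phiExp c d) (coeff d g) := by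
    conv_lhs => rw [← support_sum_monomial_coeff g]
    rw [map_sum]
    refine Finset.sum_congr rfl fun d hd => ?_
    have h1 : (monomial d (coeff d g) : MvPolynomial (Fin n ⊕ Fin n) K)
        = (coeff d g) • monomial d (1:K) := by
      rw [smul_monomial, smul_eq_mul, mul_one]
    rw [h1, map_smul, qHom_monomial (c := c) d (hstd d hd).1, smul_monomial, smul_eq_mul, mul_one]
  rw [h0] at hrep
  have hc0 := congrArg (coeff (phiExp c d0)) hrep
  rw [coeff_zero, MvPolynomial.coeff_sum] at hc0
  rw [Finset.sum_eq_single d0 (fun d hd hne' => ?_) (fun h => absurd hd0 h)] at hc0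
  · rw [coeff_monomial, if_pos rfl] at hc0
    exact (MvPolynomial.mem_support_iff.mp hd0) hc0.symm
  · rw [coeff_monomial]
    by_cases hphi : phiExp c d = phiExp c d0
    · exact absurd (std_inj (hstd d hd) (hstd d0 hd0) hphi) hne'
    · exact if_neg hphi

lemma QIdeal_eq_ker [DecidableEq C] :
    QIdeal K A c = RingHom.ker (qHom K A c).toRingHom := by
  apply le_antisymm (QIdeal_le_ker K A c)
  intro f hf
  obtain ⟨g, hgQ, hgstd⟩ := exists_reduction K A c f
  have h1 : qHom K A c (f - g) = 0 := QIdeal_le_ker K A c hgQ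
  have h2 : qHom K A c f = 0 := hf
  have hg0 : qHom K A c g = 0 := by
    rw [map_sub, h2, zero_sub, neg_eq_zero] at h1
    exact h1
  have hgz : g = 0 := std_zero K A c g hgstd hg0
  rw [hgz, sub_zero] at hgQ
  exact hgQ

lemma QIdeal_isPrime : (QIdeal K A c).IsPrime := by
  classical
  letI : DecidableEq C := Classical.decEq C
  rw [QIdeal_eq_ker]
  exact RingHom.ker_isPrime _

end PrimePart


section Glue
variable (G : SimpleGraph (Fin n)) (S : Finset (Fin n))

lemma height_add_one_le {α : Type*} [Preorder α] {x y : α} (h : x < y) :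
    Order.height x + 1 ≤ Order.height y := by
  rcases eq_or_ne (Order.height x) ⊤ with ht | ht
  · have hle : Order.height x ≤ Order.height y := Order.height_mono h.le
    rw [ht] at hle ⊢
    rw [top_le_iff.mp hle]
    simp
  · exact (ENat.add_one_le_iff ht).mpr (Order.height_strictMono h (lt_top_iff_ne_top.mpr ht))

/-- coloring of vertices by connected components of the induced graph -/
noncomputable def compColor :
    Fin n → Option ((G.induce ((↑S : Set (Fin n))ᶜ)).ConnectedComponent) := fun a =>
  if h : a ∈ ((↑S : Set (Fin n))ᶜ) then
    some ((G.induce ((↑S : Set (Fin n))ᶜ)).connectedComponentMk ⟨a, h⟩)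
  else none

lemma compColor_cond (i j : Fin n) :
    (∃ (hi : i ∈ ((↑S : Set (Fin n))ᶜ)) (hj : j ∈ ((↑S : Set (Fin n))ᶜ)),
        (G.induce ((↑S : Set (Fin n))ᶜ)).Reachable ⟨i, hi⟩ ⟨j, hj⟩)
      ↔ (i ∉ S ∧ j ∉ S ∧ compColor G S i = compColor G S j) := by
  constructor
  · rintro ⟨hi, hj, hr⟩
    refine ⟨by simpa using hi, by simpa using hj, ?_⟩
    simp only [compColor]
    rw [dif_pos hi, dif_pos hj]
    exact congrArg some (ConnectedComponent.sound hr)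
  · rintro ⟨hi, hj, hc⟩
    have hi' : i ∈ ((↑S : Set (Fin n))ᶜ) := by simpa using hi
    have hj' : j ∈ ((↑S : Set (Fin n))ᶜ) := by simpa using hj
    refine ⟨hi', hj', ?_⟩
    simp only [compColor] at hc
    rw [dif_pos hi', dif_pos hj'] at hc
    exact SimpleGraph.ConnectedComponent.eq.mp (Option.some.inj hc)

lemma PSIdeal_eq : PSIdeal K G S = QIdeal K S (compColor G S) := by
  rw [PSIdeal, QIdeal]
  congr 2
  ext p
  simp only [Set.mem_setOf_eq]
  exact exists₂_congr fun i j => and_congr_left' (compColor_cond G S i j)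

lemma PSIdeal_isPrime : (PSIdeal K G S).IsPrime := by
  rw [PSIdeal_eq]
  exact QIdeal_isPrime K S (compColor G S)

lemma mem_PSIdeal_var_inl {a : Fin n} (ha : a ∈ S) :
    (X (Sum.inl a) : MvPolynomial (Fin n ⊕ Fin n) K) ∈ PSIdeal K G S :=
  Ideal.subset_span (Or.inl (Or.inl ⟨a, by simpa using ha, rfl⟩))

lemma mem_PSIdeal_var_inr {a : Fin n} (ha : a ∈ S) :
    (X (Sum.inr a) : MvPolynomial (Fin n ⊕ Fin n) K) ∈ PSIdeal K G S :=
  Ideal.subset_span (Or.inl (Or.inr ⟨a, by simpa using ha, rfl⟩))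

lemma PSIdeal_le_insert (i : Fin n) :
    PSIdeal K G S ≤ QIdeal K (insert i S) (compColor G S) := by
  rw [PSIdeal, Ideal.span_le]
  rintro p ((⟨a, ha, rfl⟩ | ⟨a, ha, rfl⟩) | ⟨a, b, hcond, rfl⟩)
  · exact mem_QIdeal_var_inl (Finset.mem_insert_of_mem (by simpa using ha))
  · exact mem_QIdeal_var_inr (Finset.mem_insert_of_mem (by simpa using ha))
  · obtain ⟨haS, hbS, hc⟩ := (compColor_cond G S a b).mp hcond
    by_cases hai : a = i
    · subst hai
      have h1 : (X (Sum.inl a) * X (Sum.inr b) - X (Sum.inl b) * X (Sum.inr a) :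
          MvPolynomial (Fin n ⊕ Fin n) K)
          = X (Sum.inr b) * X (Sum.inl a) - X (Sum.inl b) * X (Sum.inr a) := by ring
      rw [SetLike.mem_coe, h1]
      exact Ideal.sub_mem _
        (Ideal.mul_mem_left _ _ (mem_QIdeal_var_inl (Finset.mem_insert_self a S)))
        (Ideal.mul_mem_left _ _ (mem_QIdeal_var_inr (Finset.mem_insert_self a S)))
    · by_cases hbi : b = i
      · subst hbi
        have h1 : (X (Sum.inl a) * X (Sum.inr b) - X (Sum.inl b) * X (Sum.inr a) :
            MvPolynomial (Fin n ⊕ Fin n) K)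
            = X (Sum.inl a) * X (Sum.inr b) - X (Sum.inr a) * X (Sum.inl b) := by ring
        rw [SetLike.mem_coe, h1]
        exact Ideal.sub_mem _
          (Ideal.mul_mem_left _ _ (mem_QIdeal_var_inr (Finset.mem_insert_self b S)))
          (Ideal.mul_mem_left _ _ (mem_QIdeal_var_inl (Finset.mem_insert_self b S)))
      · refine mem_QIdeal_minor ?_ ?_ hc
        · simp [Finset.mem_insert, hai, haS]
        · simp [Finset.mem_insert, hbi, hbS]

lemma QIdeal_insert_le {i : Fin n} {q : Ideal (MvPolynomial (Fin n ⊕ Fin n) K)}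
    (hq : PSIdeal K G S ≤ q)
    (hxi : (X (Sum.inl i) : MvPolynomial (Fin n ⊕ Fin n) K) ∈ q)
    (hyi : (X (Sum.inr i) : MvPolynomial (Fin n ⊕ Fin n) K) ∈ q) :
    QIdeal K (insert i S) (compColor G S) ≤ q := by
  rw [QIdeal, Ideal.span_le]
  rintro p ((⟨a, ha, rfl⟩ | ⟨a, ha, rfl⟩) | ⟨a, b, ⟨haA, hbA, hcab⟩, rfl⟩)
  · rcases Finset.mem_insert.mp (by simpa using ha) with rfl | haS
    · exact hxi
    · exact hq (mem_PSIdeal_var_inl G S haS)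
  · rcases Finset.mem_insert.mp (by simpa using ha) with rfl | haS
    · exact hyi
    · exact hq (mem_PSIdeal_var_inr G S haS)
  · have haS : a ∉ S := fun h => haA (Finset.mem_insert_of_mem h)
    have hbS : b ∉ S := fun h => hbA (Finset.mem_insert_of_mem h)
    have hcond := (compColor_cond G S a b).mpr ⟨haS, hbS, hcab⟩
    exact hq (Ideal.subset_span (Or.inr ⟨a, b, hcond, rfl⟩))

end Glue

end BEIAux

open MvPolynomial

theorem stmt15 {n : ℕ} (K : Type*) [Field K] (G : SimpleGraph (Fin n))
    (hunmixed : Unmixed G)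
    (S T : Finset (Fin n)) (hS : IsCutSet G S) (hT : IsCutSet G T)
    (hcard : S.card ≤ T.card) (hdiff : 1 < (T \ S).card) :
    heightIdeal (PSIdeal K G S) + 2 ≤ heightIdeal (PSIdeal K G S + PSIdeal K G T) := by
  classical
  obtain ⟨i, hiTS, j, hjTS, hij⟩ := Finset.one_lt_card.mp hdiff
  rw [Finset.mem_sdiff] at hiTS hjTS
  obtain ⟨hiT, hiS⟩ := hiTS
  obtain ⟨hjT, hjS⟩ := hjTS
  have hPSp : (PSIdeal K G S).IsPrime := BEIAux.PSIdeal_isPrime G S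
  have hQ1p : (BEIAux.QIdeal K (insert i S) (BEIAux.compColor G S)).IsPrime :=
    BEIAux.QIdeal_isPrime K (insert i S) (BEIAux.compColor G S)
  have hle1 : PSIdeal K G S ≤ BEIAux.QIdeal K (insert i S) (BEIAux.compColor G S) :=
    BEIAux.PSIdeal_le_insert G S i
  have hxiQ1 : (X (Sum.inl i) : MvPolynomial (Fin n ⊕ Fin n) K)
      ∈ BEIAux.QIdeal K (insert i S) (BEIAux.compColor G S) :=
    BEIAux.mem_QIdeal_var_inl (Finset.mem_insert_self i S)
  have hxiPS : (X (Sum.inl i) : MvPolynomial (Fin n ⊕ Fin n) K) ∉ PSIdeal K G S := by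
    rw [BEIAux.PSIdeal_eq]
    exact BEIAux.X_inl_not_mem_QIdeal hiS
  have hjnotin : j ∉ insert i S := by
    simp only [Finset.mem_insert]
    push_neg
    exact ⟨Ne.symm hij, hjS⟩
  have hxjQ1 : (X (Sum.inl j) : MvPolynomial (Fin n ⊕ Fin n) K)
      ∉ BEIAux.QIdeal K (insert i S) (BEIAux.compColor G S) :=
    BEIAux.X_inl_not_mem_QIdeal hjnotin
  unfold heightIdeal
  refine le_iInf fun q => le_iInf fun hq => ?_
  rw [Ideal.add_eq_sup, sup_le_iff] at hq
  obtain ⟨hSq, hTq⟩ := hq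
  have hxiq : (X (Sum.inl i) : MvPolynomial (Fin n ⊕ Fin n) K) ∈ q.asIdeal :=
    hTq (BEIAux.mem_PSIdeal_var_inl G T hiT)
  have hyiq : (X (Sum.inr i) : MvPolynomial (Fin n ⊕ Fin n) K) ∈ q.asIdeal :=
    hTq (BEIAux.mem_PSIdeal_var_inr G T hiT)
  have hxjq : (X (Sum.inl j) : MvPolynomial (Fin n ⊕ Fin n) K) ∈ q.asIdeal :=
    hTq (BEIAux.mem_PSIdeal_var_inl G T hjT)
  have hQ1q : BEIAux.QIdeal K (insert i S) (BEIAux.compColor G S) ≤ q.asIdeal :=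
    BEIAux.QIdeal_insert_le G S hSq hxiq hyiq
  set pS : PrimeSpectrum (MvPolynomial (Fin n ⊕ Fin n) K) := ⟨PSIdeal K G S, hPSp⟩ with hpS
  set p1 : PrimeSpectrum (MvPolynomial (Fin n ⊕ Fin n) K) :=
    ⟨BEIAux.QIdeal K (insert i S) (BEIAux.compColor G S), hQ1p⟩ with hp1
  have hlt1 : pS < p1 := by
    rw [← PrimeSpectrum.asIdeal_lt_asIdeal]
    refine lt_of_le_of_ne hle1 (fun h => hxiPS ?_)
    rw [show PSIdeal K G S = BEIAux.QIdeal K (insert i S) (BEIAux.compColor G S) from h]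
    exact hxiQ1
  have hlt2 : p1 < q := by
    rw [← PrimeSpectrum.asIdeal_lt_asIdeal]
    refine lt_of_le_of_ne hQ1q (fun h => hxjQ1 ?_)
    rw [show BEIAux.QIdeal K (insert i S) (BEIAux.compColor G S) = q.asIdeal from h]
    exact hxjq
  have hh1 : (⨅ (p : PrimeSpectrum (MvPolynomial (Fin n ⊕ Fin n) K))
      (_ : PSIdeal K G S ≤ p.asIdeal), Order.height p) ≤ Order.height pS :=
    iInf₂_le pS le_rfl
  have hh2 : Order.height pS + 1 ≤ Order.height p1 := BEIAux.height_add_one_le hlt1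
  have hh3 : Order.height p1 + 1 ≤ Order.height q := BEIAux.height_add_one_le hlt2
  calc (⨅ (p : PrimeSpectrum (MvPolynomial (Fin n ⊕ Fin n) K))
      (_ : PSIdeal K G S ≤ p.asIdeal), Order.height p) + 2
      ≤ Order.height pS + 2 := add_le_add_left hh1 2
    _ = (Order.height pS + 1) + 1 := by
        rw [add_assoc]
        norm_num
    _ ≤ Order.height p1 + 1 := add_le_add_left hh2 1
    _ ≤ Order.height q := hh3
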